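/- For a real α, the integral ∫₀^∞ δ^α · f_{n,q,γ}(δ) dδ is finite if and only if γ − q < α < γ + 1, where f_{n,q,γ} is the probability density defined piecewise by f(δ) = C₁·δ^{q−γ−1} for 0 ≤ δ ≤ 1 and f(δ) = C₂·δ^{q−γ−1}·B(1/δ²;(q+1)/2,(n−q)/2) for δ > 1 with positive constants C₁ = (q−γ)·ω_{γ+1}ω_{n+1}/(ω_{n−(q−γ)+1}ω_{q+1}) and C₂ = (q−γ)·ω_{γ+1}ω_{n−q}/(2ω_{n−(q−γ)+1}). -/
import Mathlib


open Real MeasureTheory Set intervalIntegral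

/-- Surface area of the unit sphere `S^{n-1}`: `ω_n = 2 π^{n/2} / Γ(n/2)`. -/
noncomputable def sphereArea (m : ℕ) : ℝ :=
  2 * Real.pi ^ ((m : ℝ) / 2) / Real.Gamma ((m : ℝ) / 2)

/-- Incomplete beta function `B(x; α, β) = ∫₀ˣ t^{α-1} (1-t)^{β-1} dt`. -/
noncomputable def incBeta (x α β : ℝ) : ℝ :=
  ∫ t in (0 : ℝ)..x, t ^ (α - 1) * (1 - t) ^ (β - 1)

/-- The density `f_{n,q,γ}` of `d(o, E ∩ L)`. -/
noncomputable def distDensity (n q γ : ℕ) (δ : ℝ) : ℝ :=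
  if δ < 0 then 0
  else if δ ≤ 1 then
    ((q : ℝ) - γ) * (sphereArea (γ + 1) * sphereArea (n + 1) /
        (sphereArea (n - (q - γ) + 1) * sphereArea (q + 1))) * δ ^ (q - γ - 1)
  else
    ((q : ℝ) - γ) * (sphereArea (γ + 1) * sphereArea (n - q) /
        (2 * sphereArea (n - (q - γ) + 1))) * δ ^ (q - γ - 1) *
      incBeta (1 / δ ^ 2) (((q : ℝ) + 1) / 2) (((n : ℝ) - q) / 2)

lemma sphereArea_pos {m : ℕ} (hm : 1 ≤ m) : 0 < sphereArea m := by
  have h : (0:ℝ) < (m:ℝ)/2 := by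
    have : (1:ℝ) ≤ (m:ℝ) := by exact_mod_cast hm
    linarith
  have hΓ := Real.Gamma_pos_of_pos h
  have hπ : (0:ℝ) < Real.pi ^ ((m:ℝ)/2) := Real.rpow_pos_of_pos Real.pi_pos _
  unfold sphereArea
  positivity

lemma betaIntegrand_contOn {a b c : ℝ} (ha : 1 ≤ a) (hc : c < 1) :
    ContinuousOn (fun t : ℝ => t ^ (a-1) * (1-t) ^ (b-1)) (Icc 0 c) := by
  apply ContinuousOn.mul
  · exact continuousOn_id.rpow_const fun t ht => Or.inr (by linarith)
  · exact (continuousOn_const.sub continuousOn_id).rpow_const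
      fun t ht => Or.inl (by have := ht.2; intro h; simp at h; nlinarith [ht.2])

lemma incBeta_nonneg {a b x : ℝ} (ha : 1 ≤ a) (hx : 0 ≤ x) (hx1 : x ≤ 1) :
    0 ≤ incBeta x a b := by
  apply intervalIntegral.integral_nonneg hx
  intro t ht
  have h0 : 0 ≤ t := ht.1
  have h1 : t ≤ 1 := ht.2.trans hx1
  exact mul_nonneg (Real.rpow_nonneg h0 _) (Real.rpow_nonneg (by linarith) _)

lemma incBeta_le {a b x : ℝ} (ha : 1 ≤ a) (hb : 0 < b) (hx : 0 ≤ x) (hx1 : x < 1) :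
    incBeta x a b ≤ 1 / b := by
  have hInt1 : IntervalIntegrable (fun t : ℝ => (1-t) ^ (b-1)) volume 0 1 := by
    have := (intervalIntegral.intervalIntegrable_rpow' (a := 0) (b := 1)
      (r := b - 1) (by linarith)).comp_sub_left 1
    simpa using this.symm
  have hIntg : IntervalIntegrable (fun t : ℝ => t ^ (a-1) * (1-t)^(b-1)) volume 0 x :=
    ContinuousOn.intervalIntegrable_of_Icc hx (betaIntegrand_contOn ha hx1)
  have hInth : IntervalIntegrable (fun t : ℝ => (1-t) ^ (b-1)) volume 0 x :=
    hInt1.mono_set (by rw [uIcc_of_le hx, uIcc_of_le zero_le_one]; exact Icc_subset_Icc le_rfl hx1.le)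
  have step1 : incBeta x a b ≤ ∫ t in (0:ℝ)..x, (1-t)^(b-1) := by
    apply intervalIntegral.integral_mono_on hx hIntg hInth
    intro t ht
    apply mul_le_of_le_one_left (Real.rpow_nonneg (by nlinarith [ht.2] : (0:ℝ) ≤ 1 - t) _)
    exact Real.rpow_le_one ht.1 (by nlinarith [ht.2]) (by linarith)
  have step2 : (∫ t in (0:ℝ)..x, (1-t)^(b-1)) ≤ ∫ t in (0:ℝ)..1, (1-t)^(b-1) := by
    apply intervalIntegral.integral_mono_interval le_rfl hx hx1.le _ hInt1
    filter_upwards [ae_restrict_mem measurableSet_Ioc] with t ht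
    exact Real.rpow_nonneg (by linarith [ht.2]) _
  have step3 : (∫ t in (0:ℝ)..1, (1-t)^(b-1)) = 1 / b := by
    rw [show (fun t : ℝ => (1-t)^(b-1)) = fun t : ℝ => (fun u : ℝ => u ^ (b-1)) (1 - t) from rfl,
      intervalIntegral.integral_comp_sub_left (fun u : ℝ => u ^ (b-1)) 1]
    simp only [sub_self, sub_zero]
    rw [integral_rpow (Or.inl (by linarith)), sub_add_cancel, Real.one_rpow,
      Real.zero_rpow hb.ne', sub_zero]
  linarith

lemma incBeta_bounds {a b x : ℝ} (ha : 1 ≤ a) (hx : 0 ≤ x) (hx4 : x ≤ 1/4) :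
    (min ((3/4:ℝ)^(b-1)) 1) * (x^a / a) ≤ incBeta x a b ∧
      incBeta x a b ≤ (max ((3/4:ℝ)^(b-1)) 1) * (x^a / a) := by
  have ha0 : (0:ℝ) < a := by linarith
  have hfac : ∀ t ∈ Icc (0:ℝ) x,
      (min ((3/4:ℝ)^(b-1)) 1) ≤ (1-t)^(b-1) ∧ (1-t)^(b-1) ≤ (max ((3/4:ℝ)^(b-1)) 1) := by
    intro t ht
    have h1 : (3/4:ℝ) ≤ 1 - t := by nlinarith [ht.2]
    have h2 : 1 - t ≤ 1 := by linarith [ht.1]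
    rcases le_or_gt 0 (b-1) with hbb | hbb
    · constructor
      · exact (min_le_left _ _).trans (Real.rpow_le_rpow (by norm_num) h1 hbb)
      · exact (Real.rpow_le_one (by linarith) h2 hbb).trans (le_max_right _ _)
    · constructor
      · exact (min_le_right _ _).trans
          (Real.one_le_rpow_of_pos_of_le_one_of_nonpos (by linarith) h2 hbb.le)
      · exact (Real.rpow_le_rpow_of_nonpos (by norm_num) h1 hbb.le).trans (le_max_left _ _)
  have hIntg : IntervalIntegrable (fun t : ℝ => t ^ (a-1) * (1-t)^(b-1)) volume 0 x :=
    ContinuousOn.intervalIntegrable_of_Icc hx (betaIntegrand_contOn ha (by linarith))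
  have hIntr : ∀ c : ℝ, IntervalIntegrable (fun t : ℝ => c * t ^ (a-1)) volume 0 x :=
    fun c => (intervalIntegral.intervalIntegrable_rpow' (by linarith)).const_mul c
  have hval : ∀ c : ℝ, (∫ t in (0:ℝ)..x, c * t ^ (a-1)) = c * (x^a / a) := by
    intro c
    rw [intervalIntegral.integral_const_mul, integral_rpow (Or.inl (by linarith))]
    rw [Real.zero_rpow (by linarith : a - 1 + 1 ≠ 0), sub_add_cancel, sub_zero]
  constructor
  · rw [← hval]
    apply intervalIntegral.integral_mono_on hx (hIntr _) hIntg
    intro t ht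
    have := (hfac t ht).1
    have h0 : (0:ℝ) ≤ t ^ (a-1) := Real.rpow_nonneg ht.1 _
    nlinarith
  · rw [← hval]
    apply intervalIntegral.integral_mono_on hx hIntg (hIntr _)
    intro t ht
    have := (hfac t ht).2
    have h0 : (0:ℝ) ≤ t ^ (a-1) := Real.rpow_nonneg ht.1 _
    nlinarith

lemma incBeta_contOn {a b : ℝ} (ha : 1 ≤ a) :
    ContinuousOn (fun x => incBeta x a b) (Ico 0 1) := by
  intro x₀ hx₀
  have hc1 : (x₀ + 1)/2 < 1 := by linarith [hx₀.2]
  have hx₀c : x₀ < (x₀ + 1)/2 := by linarith [hx₀.2]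
  have hc0 : (0:ℝ) ≤ (x₀ + 1)/2 := by linarith [hx₀.1]
  have hcont : ContinuousOn (fun x => incBeta x a b) (Icc 0 ((x₀+1)/2)) := by
    have h_int : IntegrableOn (fun t : ℝ => t ^ (a-1) * (1-t)^(b-1)) (uIcc 0 ((x₀+1)/2)) := by
      rw [uIcc_of_le hc0]
      exact (betaIntegrand_contOn ha hc1).integrableOn_Icc
    have := intervalIntegral.continuousOn_primitive_interval h_int
    rwa [uIcc_of_le hc0] at this
  refine (hcont x₀ ⟨hx₀.1, hx₀c.le⟩).mono_of_mem_nhdsWithin ?_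
  refine Filter.mem_of_superset
    (Filter.inter_mem self_mem_nhdsWithin
      (mem_nhdsWithin_of_mem_nhds (Iio_mem_nhds hx₀c))) ?_
  rintro t ⟨ht1, ht2⟩
  exact ⟨ht1.1, le_of_lt ht2⟩

set_option maxHeartbeats 1600000 in
theorem moment_finite_iff (n q γ : ℕ) (α : ℝ)
    (hn : 2 ≤ n) (hq1 : 1 ≤ q) (hq2 : q ≤ n - 1) (hγ : γ ≤ q - 1) :
    IntegrableOn (fun δ : ℝ => δ ^ α * distDensity n q γ δ) (Set.Ioi 0) ↔
      ((γ : ℝ) - q < α ∧ α < (γ : ℝ) + 1) := by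
  have hγq : γ + 1 ≤ q := by omega
  have hqn : q + 1 ≤ n := by omega
  set f : ℝ → ℝ := fun δ : ℝ => δ ^ α * distDensity n q γ δ with hfdef
  set k : ℕ := q - γ - 1 with hkdef
  have hkq : k + (γ + 1) = q := by omega
  have hk : (k:ℝ) = (q:ℝ) - γ - 1 := by
    have := congrArg (fun m : ℕ => (m:ℝ)) hkq
    push_cast at this
    linarith
  set a : ℝ := ((q:ℝ)+1)/2 with hadef
  set b : ℝ := ((n:ℝ)-q)/2 with hbdef
  have hq1' : (1:ℝ) ≤ (q:ℝ) := by exact_mod_cast hq1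
  have hqn' : (q:ℝ) + 1 ≤ (n:ℝ) := by exact_mod_cast hqn
  have ha : 1 ≤ a := by rw [hadef]; linarith
  have hb : 0 < b := by rw [hbdef]; linarith
  have ha0 : (0:ℝ) < a := by linarith
  have h2a : 2 * a = (q:ℝ) + 1 := by rw [hadef]; ring
  have hqγ : (0:ℝ) < (q:ℝ) - (γ:ℝ) := by
    have : (0:ℝ) ≤ (k:ℝ) := Nat.cast_nonneg _
    linarith
  set C₁ : ℝ := ((q:ℝ) - γ) * (sphereArea (γ+1) * sphereArea (n+1) /
      (sphereArea (n - (q - γ) + 1) * sphereArea (q+1))) with hC₁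
  set C₂ : ℝ := ((q:ℝ) - γ) * (sphereArea (γ+1) * sphereArea (n-q) /
      (2 * sphereArea (n - (q - γ) + 1))) with hC₂
  have hC₁pos : 0 < C₁ := by
    rw [hC₁]
    exact mul_pos hqγ (div_pos
      (mul_pos (sphereArea_pos (by omega)) (sphereArea_pos (by omega)))
      (mul_pos (sphereArea_pos (by omega)) (sphereArea_pos (by omega))))
  have hC₂pos : 0 < C₂ := by
    rw [hC₂]
    exact mul_pos hqγ (div_pos
      (mul_pos (sphereArea_pos (by omega)) (sphereArea_pos (by omega)))
      (mul_pos two_pos (sphereArea_pos (by omega))))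
  -- description on (0,1]
  have hEq1 : EqOn f (fun δ : ℝ => C₁ * δ ^ (α + (k:ℝ))) (Ioc 0 1) := by
    intro δ hδ
    have h0 : (0:ℝ) < δ := hδ.1
    show δ ^ α * distDensity n q γ δ = _
    rw [distDensity, if_neg (not_lt.2 h0.le), if_pos hδ.2, ← hkdef, ← hC₁]
    show _ = C₁ * δ ^ (α + (k:ℝ))
    rw [Real.rpow_add h0, Real.rpow_natCast]
    ring
  -- description on (1,∞)
  set G : ℝ → ℝ := fun δ : ℝ => δ ^ α * (C₂ * δ ^ (k:ℕ) * incBeta (1/δ^2) a b) with hGdef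
  have hEq2 : EqOn f G (Ioi 1) := by
    intro δ hδ
    have h1 : (1:ℝ) < δ := hδ
    show δ ^ α * distDensity n q γ δ = _
    rw [distDensity, if_neg (by push_neg; linarith), if_neg (not_le.2 h1), ← hkdef, ← hC₂,
      ← hadef, ← hbdef, hGdef]
  have hGcont : ContinuousOn G (Ioi 1) := by
    have hpos : ∀ δ ∈ Ioi (1:ℝ), (0:ℝ) < δ := fun δ hδ => lt_trans one_pos hδ
    have h1 : ContinuousOn (fun δ : ℝ => δ ^ α) (Ioi 1) :=
      continuousOn_id.rpow_const fun δ hδ => Or.inl (ne_of_gt (hpos δ hδ))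
    have h2 : ContinuousOn (fun δ : ℝ => C₂ * δ ^ (k:ℕ)) (Ioi 1) :=
      (continuous_const.mul (continuous_pow k)).continuousOn
    have hinner : ContinuousOn (fun δ : ℝ => 1/δ^2) (Ioi 1) := by
      apply ContinuousOn.div continuousOn_const (continuous_pow 2).continuousOn
      exact fun δ hδ => pow_ne_zero 2 (ne_of_gt (hpos δ hδ))
    have hmaps : MapsTo (fun δ : ℝ => 1/δ^2) (Ioi 1) (Ico 0 1) := by
      intro δ hδ
      have h1δ : (1:ℝ) < δ := hδ
      have : (1:ℝ) < δ^2 := by nlinarith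
      constructor
      · positivity
      · rw [div_lt_one (by linarith)]; linarith
    have h3 : ContinuousOn (fun δ : ℝ => incBeta (1/δ^2) a b) (Ioi 1) :=
      (incBeta_contOn ha).comp hinner hmaps
    exact h1.mul (h2.mul h3)
  have hfcont : ContinuousOn f (Ioi 1) := hGcont.congr hEq2
  -- identity for the tail power computations
  have hE : ∀ δ : ℝ, 0 < δ →
      δ ^ α * (δ ^ (k:ℕ) * ((1/δ^2) ^ a / a)) = δ ^ (α + (k:ℝ) - 2*a) / a := by
    intro δ hδ
    have hx : (1/δ^2 : ℝ) ^ a = δ ^ (-(2*a)) := by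
      rw [one_div, ← Real.rpow_natCast δ 2, ← Real.rpow_neg hδ.le, ← Real.rpow_mul hδ.le]
      norm_num
    have hy : δ ^ α * δ ^ ((k:ℝ)) * δ ^ (-(2*a)) = δ ^ (α + (k:ℝ) - 2*a) := by
      rw [← Real.rpow_add hδ, ← Real.rpow_add hδ, sub_eq_add_neg]
    rw [hx, ← Real.rpow_natCast δ k, ← hy]
    ring
  -- nonnegativity of f on (1,∞)
  have hfnn : ∀ δ : ℝ, 1 < δ → 0 ≤ f δ := by
    intro δ hδ
    rw [hEq2 hδ, hGdef]
    have h0 : (0:ℝ) < δ := lt_trans one_pos hδ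
    have hx0 : (0:ℝ) ≤ 1/δ^2 := by positivity
    have hx1 : (1/δ^2 : ℝ) ≤ 1 := by
      rw [div_le_one (by positivity)]; nlinarith
    have h2 := incBeta_nonneg (b := b) ha hx0 hx1
    have h1 : (0:ℝ) ≤ δ ^ α := Real.rpow_nonneg h0.le _
    exact mul_nonneg h1 (mul_nonneg (mul_nonneg hC₂pos.le (pow_nonneg h0.le k)) h2)
  constructor
  · -- forward
    intro H
    constructor
    · -- behavior near 0
      have H1 : IntegrableOn f (Ioc 0 1) := IntegrableOn.mono_set H Ioc_subset_Ioi_self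
      have H2 : IntegrableOn (fun δ : ℝ => C₁ * δ ^ (α + (k:ℝ))) (Ioc 0 1) :=
        H1.congr_fun hEq1 measurableSet_Ioc
      have H3 : IntegrableOn (fun δ : ℝ => δ ^ (α + (k:ℝ))) (Ioo 0 1) := by
        have h5 : IntegrableOn (fun δ : ℝ => C₁⁻¹ * (C₁ * δ ^ (α + (k:ℝ)))) (Ioo 0 1) :=
          IntegrableOn.mono_set (H2.const_mul C₁⁻¹) Ioo_subset_Ioc_self
        refine IntegrableOn.congr_fun h5 (fun δ hδ => ?_) measurableSet_Ioo
        show C₁⁻¹ * (C₁ * δ ^ (α + (k:ℝ))) = _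
        rw [← mul_assoc, inv_mul_cancel₀ hC₁pos.ne', one_mul]
      have := (intervalIntegral.integrableOn_Ioo_rpow_iff one_pos).1 H3
      rw [hk] at this
      linarith
    · -- behavior near ∞
      have H2 : IntegrableOn f (Ioi 2) := IntegrableOn.mono_set H (Ioi_subset_Ioi (by norm_num))
      set c1 : ℝ := min ((3/4:ℝ)^(b-1)) 1 with hc1def
      have hc1 : 0 < c1 := lt_min (Real.rpow_pos_of_pos (by norm_num) _) one_pos
      have hbound : ∀ δ ∈ Ioi (2:ℝ),
          ‖(C₂ * c1 / a) * δ ^ (α + (k:ℝ) - 2*a)‖ ≤ f δ := by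
        intro δ hδ
        have h2δ : (2:ℝ) < δ := hδ
        have h0 : (0:ℝ) < δ := by linarith
        have h1δ : (1:ℝ) < δ := by linarith
        have hx0 : (0:ℝ) ≤ 1/δ^2 := by positivity
        have hx4 : (1/δ^2 : ℝ) ≤ 1/4 := by
          rw [div_le_div_iff₀ (by positivity) (by norm_num)]; nlinarith
        have hlow := (incBeta_bounds (b := b) ha hx0 hx4).1
        rw [Real.norm_eq_abs, abs_of_nonneg (le_of_lt (mul_pos
          (div_pos (mul_pos hC₂pos hc1) ha0) (Real.rpow_pos_of_pos h0 _)))]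
        rw [hEq2 h1δ, hGdef]
        have hstep : (C₂ * c1 / a) * δ ^ (α + (k:ℝ) - 2*a)
            = C₂ * c1 * (δ ^ α * (δ ^ (k:ℕ) * ((1/δ^2) ^ a / a))) := by
          rw [hE δ h0]; ring
        rw [hstep]
        have hδα : (0:ℝ) ≤ δ ^ α := Real.rpow_nonneg h0.le _
        have hδk : (0:ℝ) ≤ δ ^ (k:ℕ) := by positivity
        calc C₂ * c1 * (δ ^ α * (δ ^ (k:ℕ) * ((1/δ^2) ^ a / a)))
            = δ ^ α * (C₂ * δ ^ (k:ℕ) * (c1 * ((1/δ^2) ^ a / a))) := by ring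
          _ ≤ δ ^ α * (C₂ * δ ^ (k:ℕ) * incBeta (1/δ^2) a b) := by
              apply mul_le_mul_of_nonneg_left _ hδα
              apply mul_le_mul_of_nonneg_left _ (mul_nonneg hC₂pos.le hδk)
              exact hlow
      have hmeas : AEStronglyMeasurable
          (fun δ : ℝ => (C₂ * c1 / a) * δ ^ (α + (k:ℝ) - 2*a)) (volume.restrict (Ioi 2)) := by
        apply ContinuousOn.aestronglyMeasurable _ measurableSet_Ioi
        exact continuousOn_const.mul (continuousOn_id.rpow_const
          fun δ hδ => Or.inl (ne_of_gt (lt_trans two_pos hδ)))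
      have H3 : IntegrableOn
          (fun δ : ℝ => (C₂ * c1 / a) * δ ^ (α + (k:ℝ) - 2*a)) (Ioi 2) := by
        apply Integrable.mono' H2 hmeas
        filter_upwards [ae_restrict_mem measurableSet_Ioi] with δ hδ
        exact hbound δ hδ
      have H4 : IntegrableOn (fun δ : ℝ => δ ^ (α + (k:ℝ) - 2*a)) (Ioi 2) := by
        have h5 : IntegrableOn (fun δ : ℝ => (C₂ * c1 / a)⁻¹ * ((C₂ * c1 / a) * δ ^ (α + (k:ℝ) - 2*a))) (Ioi 2) :=
          H3.const_mul (C₂ * c1 / a)⁻¹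
        refine IntegrableOn.congr_fun h5 (fun δ hδ => ?_) measurableSet_Ioi
        have hne : C₂ * c1 / a ≠ 0 := ne_of_gt (div_pos (mul_pos hC₂pos hc1) ha0)
        show (C₂ * c1 / a)⁻¹ * ((C₂ * c1 / a) * δ ^ (α + (k:ℝ) - 2*a)) = _
        rw [← mul_assoc, inv_mul_cancel₀ hne, one_mul]
      have := (integrableOn_Ioi_rpow_iff two_pos).1 H4
      rw [hk, h2a] at this
      linarith
  · -- backward
    rintro ⟨hα1, hα2⟩
    have hsplit : Ioi (0:ℝ) = Ioc 0 1 ∪ (Ioc 1 2 ∪ Ioi 2) := by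
      rw [Ioc_union_Ioi_eq_Ioi (by norm_num : (1:ℝ) ≤ 2),
        Ioc_union_Ioi_eq_Ioi (by norm_num : (0:ℝ) ≤ 1)]
    rw [hsplit]
    refine IntegrableOn.union ?_ (IntegrableOn.union ?_ ?_)
    · -- (0,1]
      have h1 : IntegrableOn (fun δ : ℝ => δ ^ (α + (k:ℝ))) (Ioo 0 1) :=
        (intervalIntegral.integrableOn_Ioo_rpow_iff one_pos).2 (by rw [hk]; linarith)
      have h2 : IntegrableOn (fun δ : ℝ => δ ^ (α + (k:ℝ))) (Ioc 0 1) := by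
        unfold IntegrableOn at h1 ⊢
        rwa [← Measure.restrict_congr_set Ioo_ae_eq_Ioc]
      exact IntegrableOn.congr_fun (h2.const_mul C₁) hEq1.symm measurableSet_Ioc
    · -- (1,2]
      have hcont : ContinuousOn f (Ioc 1 2) := hfcont.mono Ioc_subset_Ioi_self
      refine ⟨hcont.aestronglyMeasurable measurableSet_Ioc,
        HasFiniteIntegral.restrict_of_bounded
          (C := (max 1 (2^α)) * (C₂ * 2^(k:ℕ) * (1/b))) measure_Ioc_lt_top ?_⟩
      filter_upwards [ae_restrict_mem measurableSet_Ioc] with δ hδ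
      have h1δ : (1:ℝ) < δ := hδ.1
      have h0 : (0:ℝ) < δ := lt_trans one_pos h1δ
      have hδ2 : δ ≤ 2 := hδ.2
      have hx0 : (0:ℝ) ≤ 1/δ^2 := by positivity
      have hx1 : (1/δ^2 : ℝ) < 1 := by
        rw [div_lt_one (by positivity)]; nlinarith
      rw [Real.norm_eq_abs, abs_of_nonneg (hfnn δ h1δ), hEq2 h1δ, hGdef]
      have hfac1 : δ ^ α ≤ max 1 (2^α) := by
        rcases le_or_gt 0 α with hα | hα
        · exact (Real.rpow_le_rpow h0.le hδ2 hα).trans (le_max_right _ _)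
        · exact (Real.rpow_le_one_of_one_le_of_nonpos h1δ.le hα.le).trans (le_max_left _ _)
      have hfac2 : (δ:ℝ) ^ (k:ℕ) ≤ 2 ^ (k:ℕ) := pow_le_pow_left₀ h0.le hδ2 k
      have hfac3 : incBeta (1/δ^2) a b ≤ 1/b := incBeta_le ha hb hx0 hx1
      have hib : 0 ≤ incBeta (1/δ^2) a b := incBeta_nonneg ha hx0 hx1.le
      have hδα : (0:ℝ) ≤ δ ^ α := Real.rpow_nonneg h0.le _
      calc δ ^ α * (C₂ * δ ^ (k:ℕ) * incBeta (1/δ^2) a b)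
          ≤ (max 1 (2^α)) * (C₂ * δ ^ (k:ℕ) * incBeta (1/δ^2) a b) := by
            apply mul_le_mul_of_nonneg_right hfac1
            exact mul_nonneg (mul_nonneg hC₂pos.le (pow_nonneg h0.le k)) hib
        _ ≤ (max 1 (2^α)) * (C₂ * 2 ^ (k:ℕ) * (1/b)) := by
            apply mul_le_mul_of_nonneg_left _ (le_max_of_le_left zero_le_one)
            apply mul_le_mul (by
              apply mul_le_mul_of_nonneg_left hfac2 hC₂pos.le) hfac3 hib
            exact mul_nonneg hC₂pos.le (pow_nonneg (by norm_num) k)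
    · -- (2,∞)
      set c2 : ℝ := max ((3/4:ℝ)^(b-1)) 1 with hc2def
      have hc2 : 0 < c2 := lt_of_lt_of_le one_pos (le_max_right _ _)
      have hrint : IntegrableOn (fun δ : ℝ => δ ^ (α + (k:ℝ) - 2*a)) (Ioi 2) :=
        (integrableOn_Ioi_rpow_iff two_pos).2 (by rw [hk, h2a]; linarith)
      apply Integrable.mono' ((hrint.const_mul (C₂ * c2 / a)))
        ((hfcont.mono (Ioi_subset_Ioi (by norm_num))).aestronglyMeasurable measurableSet_Ioi)
      filter_upwards [ae_restrict_mem measurableSet_Ioi] with δ hδ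
      have h2δ : (2:ℝ) < δ := hδ
      have h0 : (0:ℝ) < δ := by linarith
      have h1δ : (1:ℝ) < δ := by linarith
      have hx0 : (0:ℝ) ≤ 1/δ^2 := by positivity
      have hx4 : (1/δ^2 : ℝ) ≤ 1/4 := by
        rw [div_le_div_iff₀ (by positivity) (by norm_num)]; nlinarith
      have hup := (incBeta_bounds (b := b) ha hx0 hx4).2
      rw [Real.norm_eq_abs, abs_of_nonneg (hfnn δ h1δ), hEq2 h1δ, hGdef]
      have hstep : (C₂ * c2 / a) * δ ^ (α + (k:ℝ) - 2*a)
          = C₂ * c2 * (δ ^ α * (δ ^ (k:ℕ) * ((1/δ^2) ^ a / a))) := by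
        rw [hE δ h0]; ring
      rw [hstep]
      have hδα : (0:ℝ) ≤ δ ^ α := Real.rpow_nonneg h0.le _
      calc δ ^ α * (C₂ * δ ^ (k:ℕ) * incBeta (1/δ^2) a b)
          ≤ δ ^ α * (C₂ * δ ^ (k:ℕ) * (c2 * ((1/δ^2) ^ a / a))) := by
            apply mul_le_mul_of_nonneg_left _ hδα
            apply mul_le_mul_of_nonneg_left _ (mul_nonneg hC₂pos.le (pow_nonneg h0.le k))
            exact hup
        _ = C₂ * c2 * (δ ^ α * (δ ^ (k:ℕ) * ((1/δ^2) ^ a / a))) := by ring
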